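/- Under the Markov assumption X_S − X_0 − X_T for disjoint S,T ⊆ L, for any S ⊆ L one has v(S) = I(X_S; X_0) − I(X_S; X_{L\S}), where v(S) = I(X_S; X_0 | X_{L\S}). -/
import Mathlib


noncomputable section
open Finset
open scoped Classical BigOperators

/-- Probability of an event under a pmf on a finite sample space. -/
def Pr {Ω : Type} [Fintype Ω] (p : Ω → ℝ) (E : Ω → Prop) : ℝ :=
  ∑ ω : Ω, if E ω then p ω else 0

/-- `p` is a probability mass function. -/
def IsPMF {Ω : Type} [Fintype Ω] (p : Ω → ℝ) : Prop :=
  (∀ ω, 0 ≤ p ω) ∧ (∑ ω : Ω, p ω) = 1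

/-- Shannon entropy of a finitely-valued random variable `X` under pmf `p`. -/
def ent {Ω α : Type} [Fintype Ω] [Fintype α] (p : Ω → ℝ) (X : Ω → α) : ℝ :=
  -∑ a : α, Pr p (fun ω => X ω = a) * Real.log (Pr p (fun ω => X ω = a))

/-- Conditional Shannon entropy `H(X|Y)`. -/
def condEnt {Ω α β : Type} [Fintype Ω] [Fintype α] [Fintype β]
    (p : Ω → ℝ) (X : Ω → α) (Y : Ω → β) : ℝ :=
  ent p (fun ω => (X ω, Y ω)) - ent p Y

/-- Mutual information `I(X;Y)`. -/
def mi {Ω α β : Type} [Fintype Ω] [Fintype α] [Fintype β]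
    (p : Ω → ℝ) (X : Ω → α) (Y : Ω → β) : ℝ :=
  ent p X + ent p Y - ent p (fun ω => (X ω, Y ω))

/-- Conditional mutual information `I(X;Y|Z)`. -/
def cmi {Ω α β γ : Type} [Fintype Ω] [Fintype α] [Fintype β] [Fintype γ]
    (p : Ω → ℝ) (X : Ω → α) (Y : Ω → β) (Z : Ω → γ) : ℝ :=
  ent p (fun ω => (X ω, Z ω)) + ent p (fun ω => (Y ω, Z ω))
    - ent p (fun ω => (X ω, Y ω, Z ω)) - ent p Z

/-- `X` and `Y` are conditionally independent given `Z` (Markov chain `X - Z - Y`). -/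
def CondIndep {Ω α β γ : Type} [Fintype Ω] [Fintype α] [Fintype β] [Fintype γ]
    (p : Ω → ℝ) (X : Ω → α) (Y : Ω → β) (Z : Ω → γ) : Prop :=
  ∀ (a : α) (b : β) (c : γ),
    Pr p (fun ω => X ω = a ∧ Y ω = b ∧ Z ω = c) * Pr p (fun ω => Z ω = c)
      = Pr p (fun ω => X ω = a ∧ Z ω = c) * Pr p (fun ω => Y ω = b ∧ Z ω = c)

/-- The tuple random variable `X_S = (X_l)_{l ∈ S}`. -/
def XS {Ω L 𝒳 : Type} [Fintype Ω] (X : L → Ω → 𝒳) (S : Finset L) :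
    Ω → (S → 𝒳) :=
  fun ω i => X i ω

/-- The value function of the secret-key generation game:
`v(S) = I(X_S; X_0 | X_{L\S})`. -/
def vGame {Ω L 𝒳 β : Type} [Fintype Ω] [Fintype L] [DecidableEq L] [Fintype 𝒳] [Fintype β]
    (p : Ω → ℝ) (X : L → Ω → 𝒳) (X0 : Ω → β) (S : Finset L) : ℝ :=
  cmi p (XS X S) X0 (XS X Sᶜ)


lemma Pr_congr {Ω : Type} [Fintype Ω] (p : Ω → ℝ) {E F : Ω → Prop}
    (h : ∀ ω, E ω ↔ F ω) : Pr p E = Pr p F := by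
  unfold Pr
  exact Finset.sum_congr rfl fun ω _ => by rw [if_congr (h ω) rfl rfl]

lemma Pr_nonneg {Ω : Type} [Fintype Ω] {p : Ω → ℝ} (hp : ∀ ω, 0 ≤ p ω) (E : Ω → Prop) :
    0 ≤ Pr p E :=
  Finset.sum_nonneg fun ω _ => by by_cases h : E ω <;> simp [h, hp ω]

lemma Pr_fiber {Ω β : Type} [Fintype Ω] [Fintype β] (p : Ω → ℝ) (Y : Ω → β) (E : Ω → Prop) :
    Pr p E = ∑ b : β, Pr p (fun ω => E ω ∧ Y ω = b) := by
  unfold Pr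
  rw [Finset.sum_comm]
  refine Finset.sum_congr rfl fun ω _ => ?_
  by_cases h : E ω <;> simp [h]

lemma key2 {α β : Type} [Fintype α] [Fintype β]
    (u : α → β → ℝ) (hu : ∀ a b, 0 ≤ u a b)
    (h : ∀ a b, u a b * (∑ a', ∑ b', u a' b') = (∑ b', u a b') * (∑ a', u a' b)) :
    ∑ a, ∑ b, u a b * Real.log (u a b)
      = (∑ a, (∑ b, u a b) * Real.log (∑ b, u a b))
        + (∑ b, (∑ a, u a b) * Real.log (∑ a, u a b))
        - (∑ a, ∑ b, u a b) * Real.log (∑ a, ∑ b, u a b) := by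
  have e1 : (∑ a, (∑ b, u a b) * Real.log (∑ b, u a b))
      = ∑ a, ∑ b, u a b * Real.log (∑ b', u a b') :=
    Finset.sum_congr rfl fun a _ => Finset.sum_mul ..
  have e2 : (∑ b, (∑ a, u a b) * Real.log (∑ a, u a b))
      = ∑ a, ∑ b, u a b * Real.log (∑ a', u a' b) := by
    rw [Finset.sum_comm]
    exact Finset.sum_congr rfl fun b _ => Finset.sum_mul ..
  have e3 : (∑ a, ∑ b, u a b) * Real.log (∑ a, ∑ b, u a b)
      = ∑ a, ∑ b, u a b * Real.log (∑ a', ∑ b', u a' b') := by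
    rw [Finset.sum_mul]
    exact Finset.sum_congr rfl fun a _ => Finset.sum_mul ..
  rw [e1, e2, e3, ← Finset.sum_add_distrib, ← Finset.sum_sub_distrib]
  refine Finset.sum_congr rfl fun a _ => ?_
  rw [← Finset.sum_add_distrib, ← Finset.sum_sub_distrib]
  refine Finset.sum_congr rfl fun b _ => ?_
  by_cases h0 : u a b = 0
  · simp [h0]
  have htpos : 0 < u a b := lt_of_le_of_ne (hu a b) (Ne.symm h0)
  have hm : 0 < ∑ b', u a b' :=
    lt_of_lt_of_le htpos (Finset.single_le_sum (fun b' _ => hu a b') (Finset.mem_univ b))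
  have hn : 0 < ∑ a', u a' b :=
    lt_of_lt_of_le htpos (Finset.single_le_sum (fun a' _ => hu a' b) (Finset.mem_univ a))
  have hs : 0 < ∑ a', ∑ b', u a' b' :=
    lt_of_lt_of_le hm (Finset.single_le_sum
      (f := fun a' => ∑ b', u a' b') (fun a' _ => Finset.sum_nonneg fun b' _ => hu a' b')
      (Finset.mem_univ a))
  have hlog := congrArg Real.log (h a b)
  rw [Real.log_mul (ne_of_gt htpos) (ne_of_gt hs),
      Real.log_mul (ne_of_gt hm) (ne_of_gt hn)] at hlog
  have : Real.log (u a b) = Real.log (∑ b', u a b') + Real.log (∑ a', u a' b)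
      - Real.log (∑ a', ∑ b', u a' b') := by linarith
  rw [this]; ring

lemma ent_condIndep {Ω α β γ : Type} [Fintype Ω] [Fintype α] [Fintype β] [Fintype γ]
    (p : Ω → ℝ) (hp : ∀ ω, 0 ≤ p ω) (U : Ω → α) (V : Ω → γ) (W : Ω → β)
    (h : ∀ a b c, Pr p (fun ω => U ω = a ∧ W ω = b ∧ V ω = c) * Pr p (fun ω => V ω = c)
      = Pr p (fun ω => U ω = a ∧ V ω = c) * Pr p (fun ω => W ω = b ∧ V ω = c)) :
    ent p (fun ω => (U ω, V ω, W ω))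
      = ent p (fun ω => (U ω, V ω)) + ent p (fun ω => (V ω, W ω)) - ent p V := by
  set t : γ → α → β → ℝ := fun c a b => Pr p (fun ω => U ω = a ∧ V ω = c ∧ W ω = b) with htdef
  have fUV' : ∀ a c, Pr p (fun ω => U ω = a ∧ V ω = c) = ∑ b, t c a b := fun a c => by
    rw [Pr_fiber p W]
    exact Finset.sum_congr rfl fun b _ => Pr_congr p fun ω => by tauto
  have fWV' : ∀ b c, Pr p (fun ω => W ω = b ∧ V ω = c) = ∑ a, t c a b := fun b c => by
    rw [Pr_fiber p U]
    exact Finset.sum_congr rfl fun a _ => Pr_congr p fun ω => by tauto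
  have fV : ∀ c, Pr p (fun ω => V ω = c) = ∑ a, ∑ b, t c a b := fun c => by
    rw [Pr_fiber p U (fun ω => V ω = c)]
    refine Finset.sum_congr rfl fun a _ => ?_
    rw [Pr_fiber p W]
    exact Finset.sum_congr rfl fun b _ => Pr_congr p fun ω => by tauto
  have ht' : ∀ a b c, Pr p (fun ω => U ω = a ∧ W ω = b ∧ V ω = c) = t c a b := fun a b c =>
    Pr_congr p fun ω => by tauto
  have hkey : ∀ c, ∑ a, ∑ b, t c a b * Real.log (t c a b)
      = (∑ a, (∑ b, t c a b) * Real.log (∑ b, t c a b))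
        + (∑ b, (∑ a, t c a b) * Real.log (∑ a, t c a b))
        - (∑ a, ∑ b, t c a b) * Real.log (∑ a, ∑ b, t c a b) := fun c => by
    refine key2 (t c) (fun a b => Pr_nonneg hp _) fun a b => ?_
    have := h a b c
    rw [ht', fV, fUV', fWV'] at this
    exact this
  have E3 : ent p (fun ω => (U ω, V ω, W ω))
      = -∑ c, ∑ a, ∑ b, t c a b * Real.log (t c a b) := by
    unfold ent
    congr 1
    calc ∑ x : α × γ × β,
          Pr p (fun ω => (U ω, V ω, W ω) = x) * Real.log (Pr p (fun ω => (U ω, V ω, W ω) = x))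
        = ∑ a, ∑ y : γ × β, Pr p (fun ω => (U ω, V ω, W ω) = (a, y))
            * Real.log (Pr p (fun ω => (U ω, V ω, W ω) = (a, y))) := Fintype.sum_prod_type ..
      _ = ∑ y : γ × β, ∑ a, Pr p (fun ω => (U ω, V ω, W ω) = (a, y))
            * Real.log (Pr p (fun ω => (U ω, V ω, W ω) = (a, y))) := Finset.sum_comm ..
      _ = ∑ c, ∑ b, ∑ a, Pr p (fun ω => (U ω, V ω, W ω) = (a, c, b))
            * Real.log (Pr p (fun ω => (U ω, V ω, W ω) = (a, c, b))) := Fintype.sum_prod_type ..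
      _ = ∑ c, ∑ a, ∑ b, Pr p (fun ω => (U ω, V ω, W ω) = (a, c, b))
            * Real.log (Pr p (fun ω => (U ω, V ω, W ω) = (a, c, b))) :=
          Finset.sum_congr rfl fun c _ => Finset.sum_comm ..
      _ = ∑ c, ∑ a, ∑ b, t c a b * Real.log (t c a b) := by
          refine Finset.sum_congr rfl fun c _ => Finset.sum_congr rfl fun a _ =>
            Finset.sum_congr rfl fun b _ => ?_
          rw [show Pr p (fun ω => (U ω, V ω, W ω) = (a, c, b)) = t c a b from
            Pr_congr p fun ω => by simp [Prod.ext_iff, and_assoc]]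
  have E1 : ent p (fun ω => (U ω, V ω))
      = -∑ c, ∑ a, (∑ b, t c a b) * Real.log (∑ b, t c a b) := by
    unfold ent
    congr 1
    calc ∑ x : α × γ,
          Pr p (fun ω => (U ω, V ω) = x) * Real.log (Pr p (fun ω => (U ω, V ω) = x))
        = ∑ a, ∑ c, Pr p (fun ω => (U ω, V ω) = (a, c))
            * Real.log (Pr p (fun ω => (U ω, V ω) = (a, c))) := Fintype.sum_prod_type ..
      _ = ∑ c, ∑ a, Pr p (fun ω => (U ω, V ω) = (a, c))
            * Real.log (Pr p (fun ω => (U ω, V ω) = (a, c))) := Finset.sum_comm ..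
      _ = ∑ c, ∑ a, (∑ b, t c a b) * Real.log (∑ b, t c a b) := by
          refine Finset.sum_congr rfl fun c _ => Finset.sum_congr rfl fun a _ => ?_
          rw [show Pr p (fun ω => (U ω, V ω) = (a, c)) = ∑ b, t c a b from by
            rw [Pr_congr p (F := fun ω => U ω = a ∧ V ω = c) fun ω => by simp [Prod.ext_iff]]
            exact fUV' a c]
  have E2 : ent p (fun ω => (V ω, W ω))
      = -∑ c, ∑ b, (∑ a, t c a b) * Real.log (∑ a, t c a b) := by
    unfold ent
    congr 1
    calc ∑ x : γ × β,
          Pr p (fun ω => (V ω, W ω) = x) * Real.log (Pr p (fun ω => (V ω, W ω) = x))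
        = ∑ c, ∑ b, Pr p (fun ω => (V ω, W ω) = (c, b))
            * Real.log (Pr p (fun ω => (V ω, W ω) = (c, b))) := Fintype.sum_prod_type ..
      _ = ∑ c, ∑ b, (∑ a, t c a b) * Real.log (∑ a, t c a b) := by
          refine Finset.sum_congr rfl fun c _ => Finset.sum_congr rfl fun b _ => ?_
          rw [show Pr p (fun ω => (V ω, W ω) = (c, b)) = ∑ a, t c a b from by
            rw [Pr_congr p (F := fun ω => W ω = b ∧ V ω = c) fun ω => by
              simp [Prod.ext_iff, and_comm]]
            exact fWV' b c]
  have E0 : ent p V = -∑ c, (∑ a, ∑ b, t c a b) * Real.log (∑ a, ∑ b, t c a b) := by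
    unfold ent
    congr 1
    exact Finset.sum_congr rfl fun c _ => by rw [fV]
  rw [E0, E1, E2, E3]
  have hsum : ∑ c, ∑ a, ∑ b, t c a b * Real.log (t c a b)
      = (∑ c, ∑ a, (∑ b, t c a b) * Real.log (∑ b, t c a b))
        + (∑ c, ∑ b, (∑ a, t c a b) * Real.log (∑ a, t c a b))
        - ∑ c, (∑ a, ∑ b, t c a b) * Real.log (∑ a, ∑ b, t c a b) := by
    rw [← Finset.sum_add_distrib, ← Finset.sum_sub_distrib]
    exact Finset.sum_congr rfl fun c _ => hkey c
  linarith

/-- under the Markov assumption,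
`v(S) = I(X_S; X_0) - I(X_S; X_{L\S})`. -/
theorem statement9 {Ω L 𝒳 β : Type} [Fintype Ω] [Fintype L] [DecidableEq L] [Fintype 𝒳] [Fintype β]
    (p : Ω → ℝ) (hp : IsPMF p) (X : L → Ω → 𝒳) (X0 : Ω → β)
    (hM : ∀ S T : Finset L, Disjoint S T → CondIndep p (XS X S) (XS X T) X0)
    (S : Finset L) :
    vGame p X X0 S = mi p (XS X S) X0 - mi p (XS X S) (XS X Sᶜ) := by
  have hE := ent_condIndep p hp.1 (XS X S) X0 (XS X Sᶜ) (hM S Sᶜ disjoint_compl_right)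
  unfold vGame cmi mi
  linarith
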